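/- For all integers l, j, l′, j′ ≥ 0 with l + jm ≤ n and l′ + j′m ≤ n, one has X_{l′,j′} ⊆ X_{l,j} if and only if (n − l − jm) − (n − l′ − j′m) ≥ max(0, (j′ − j)m), i.e. if and only if (l′ + j′m) − (l + jm) ≥ max(0, (j′ − j)m). In particular X_{l′,j′} ⊆ X_{l,j} implies l′ ≥ l. -/

import Mathlib

/- Statement 1: the inclusion criterion for the strata `X_{l,j} ⊆ ℂ^n`. -/

/-- The stratum `X_{l,j} ⊆ ℂ^n`: the set of points having `l` coordinates equal to `0`
and `j` further disjoint collections of `m` coordinates which differ from each other by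
`ℓ`-th roots of unity.  (For `l < 0`, `j < 0` or `l + jm > n` the set is empty.) -/
def Xset (n ℓ m : ℕ) (l j : ℤ) : Set (Fin n → ℂ) :=
  {x | ∃ (Z : Finset (Fin n)) (k : ℕ) (B : Fin k → Finset (Fin n)),
    (Z.card : ℤ) = l ∧ (k : ℤ) = j ∧ (∀ t, (B t).card = m) ∧
    (∀ t, Disjoint Z (B t)) ∧ (∀ t t', t ≠ t' → Disjoint (B t) (B t')) ∧
    (∀ i ∈ Z, x i = 0) ∧
    (∀ t, ∀ i ∈ B t, ∀ i' ∈ B t, ∃ γ : ℂ, γ ^ ℓ = 1 ∧ x i = γ * x i')}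

lemma exists_blocks {α : Type*} [DecidableEq α] (T : Finset α) (d m : ℕ)
    (h : d * m ≤ T.card) :
    ∃ B : Fin d → Finset α, (∀ t, (B t).card = m) ∧ (∀ t, B t ⊆ T) ∧
      (∀ t t', t ≠ t' → Disjoint (B t) (B t')) := by
  obtain ⟨S, hST, hScard⟩ := Finset.exists_subset_card_eq h
  rcases Nat.eq_zero_or_pos m with hm | hm
  · exact ⟨fun _ => ∅, fun t => by simp [hm], fun t => by simp, fun t t' _ => by simp⟩
  have e : Fin (d * m) ≃ {x // x ∈ S} := (Fin.castOrderIso hScard.symm).toEquiv.trans S.equivFin.symm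
  have hidx : ∀ (t : Fin d) (i : Fin m), t.val * m + i.val < d * m := by
    intro t i
    calc t.val * m + i.val < t.val * m + m := by omega
    _ = (t.val + 1) * m := by ring
    _ ≤ d * m := Nat.mul_le_mul_right m t.isLt
  set f : Fin d → Fin m → α := fun t i => (e ⟨t.val * m + i.val, hidx t i⟩ : α) with hf
  have hfinj : ∀ t i t' i', f t i = f t' i' → t = t' ∧ i = i' := by
    intro t i t' i' heq
    have := e.injective (Subtype.ext heq)
    have h2 : t.val * m + i.val = t'.val * m + i'.val := congrArg Fin.val this
    have ht : t.val = t'.val := by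
      have h3 := congrArg (· / m) h2
      simpa [Nat.add_mul_div_left _ _ hm, Nat.div_eq_of_lt i.isLt, Nat.div_eq_of_lt i'.isLt,
        Nat.mul_div_cancel _ hm, Nat.mul_add_div hm, Nat.mul_comm] using h3
    constructor
    · exact Fin.ext ht
    · apply Fin.ext
      rw [ht] at h2
      omega
  refine ⟨fun t => Finset.image (f t) Finset.univ, ?_, ?_, ?_⟩
  · intro t
    rw [Finset.card_image_of_injective _ (fun i i' hii => (hfinj t i t i' hii).2)]
    simp
  · intro t x hx
    simp only [Finset.mem_image] at hx
    obtain ⟨i, _, rfl⟩ := hx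
    exact hST (e _).2
  · intro t t' htt'
    rw [Finset.disjoint_left]
    intro x hx hx'
    simp only [Finset.mem_image] at hx hx'
    obtain ⟨i, _, rfl⟩ := hx
    obtain ⟨i', _, heq⟩ := hx'
    exact htt' ((hfinj t' i' t i heq).1.symm)

/-- auxiliary weight function for the extremal witness point -/
def wfun (L' J' m i : ℕ) : ℕ :=
  if i < L' then 0 else if i < L' + J' * m then (i - L') / m + 1 else J' + 1 + i

lemma rel_collapse (ℓ : ℕ) (hℓ : 1 ≤ ℓ) (a b : ℕ) (γ : ℂ) (hγ : γ ^ ℓ = 1)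
    (h : (a : ℂ) = γ * b) : a = b := by
  have habs : ‖γ‖ = 1 := by
    have h1 : (‖γ‖) ^ ℓ = 1 := by
      rw [← norm_pow, hγ, norm_one]
    rcases lt_trichotomy (‖γ‖) 1 with hlt | heq | hgt
    · have := pow_lt_one₀ (norm_nonneg γ) hlt (n := ℓ) (by omega)
      rw [h1] at this; linarith
    · exact heq
    · have := one_lt_pow₀ hgt (n := ℓ) (by omega)
      rw [h1] at this; linarith
  have h2 : (a : ℝ) = (b : ℝ) := by
    have := congrArg norm h
    rwa [norm_mul, habs, one_mul, Complex.norm_natCast, Complex.norm_natCast] at this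
  exact_mod_cast h2

lemma wfun_eq_zero_iff (L' J' m i : ℕ) : wfun L' J' m i = 0 ↔ i < L' := by
  unfold wfun
  split_ifs with h1 h2
  · simp [h1]
  · simp [h1]
  · simp [h1]

lemma xw_mem (n ℓ m L' J' : ℕ) (hℓ : 1 ≤ ℓ) (hm : 1 ≤ m) (hn : L' + J' * m ≤ n) :
    (fun i : Fin n => ((wfun L' J' m i.val : ℕ) : ℂ)) ∈
      {x : Fin n → ℂ | ∃ (Z : Finset (Fin n)) (k : ℕ) (B : Fin k → Finset (Fin n)),
        (Z.card : ℤ) = (L' : ℤ) ∧ (k : ℤ) = (J' : ℤ) ∧ (∀ t, (B t).card = m) ∧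
        (∀ t, Disjoint Z (B t)) ∧ (∀ t t', t ≠ t' → Disjoint (B t) (B t')) ∧
        (∀ i ∈ Z, x i = 0) ∧
        (∀ t, ∀ i ∈ B t, ∀ i' ∈ B t, ∃ γ : ℂ, γ ^ ℓ = 1 ∧ x i = γ * x i')} := by
  have hblk : ∀ t : Fin J', ∀ a ∈ Finset.Ico (L' + t.val * m) (L' + t.val * m + m), a < n := by
    intro t a ha
    rw [Finset.mem_Ico] at ha
    have : (t.val + 1) * m ≤ J' * m := Nat.mul_le_mul_right m t.isLt
    have : t.val * m + m ≤ J' * m := by rw [add_one_mul] at this; omega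
    omega
  have hZ : ∀ a ∈ Finset.range L', a < n := fun a ha => by
    rw [Finset.mem_range] at ha; omega
  refine ⟨(Finset.range L').attachFin hZ, J',
    fun t => (Finset.Ico (L' + t.val * m) (L' + t.val * m + m)).attachFin (hblk t),
    by simp, rfl, ?_, ?_, ?_, ?_, ?_⟩
  · intro t; rw [Finset.card_attachFin]; simp
  · intro t
    rw [Finset.disjoint_left]
    intro i hi hi'
    rw [Finset.mem_attachFin, Finset.mem_range] at hi
    rw [Finset.mem_attachFin, Finset.mem_Ico] at hi'
    omega
  · intro t t' htt'
    rw [Finset.disjoint_left]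
    intro i hi hi'
    rw [Finset.mem_attachFin, Finset.mem_Ico] at hi hi'
    have hne : t.val ≠ t'.val := fun h => htt' (Fin.ext h)
    rcases Nat.lt_or_ge t.val t'.val with hlt | hge
    · have : (t.val + 1) * m ≤ t'.val * m := Nat.mul_le_mul_right m hlt
      rw [add_one_mul] at this; omega
    · have hlt : t'.val < t.val := by omega
      have : (t'.val + 1) * m ≤ t.val * m := Nat.mul_le_mul_right m hlt
      rw [add_one_mul] at this; omega
  · intro i hi
    rw [Finset.mem_attachFin, Finset.mem_range] at hi
    simp only []
    rw [(wfun_eq_zero_iff L' J' m i.val).mpr hi]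
    simp
  · intro t i hi i' hi'
    rw [Finset.mem_attachFin, Finset.mem_Ico] at hi hi'
    have hval : ∀ a : ℕ, L' + t.val * m ≤ a → a < L' + t.val * m + m → wfun L' J' m a = t.val + 1 := by
      intro a h1 h2
      have hJm : t.val * m + m ≤ J' * m := by
        have : (t.val + 1) * m ≤ J' * m := Nat.mul_le_mul_right m t.isLt
        rw [add_one_mul] at this; omega
      unfold wfun
      rw [if_neg (by omega), if_pos (by omega)]
      congr 1
      exact Nat.div_eq_of_lt_le (by omega) (by rw [add_one_mul]; omega)
    refine ⟨1, one_pow ℓ, ?_⟩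
    simp only []
    rw [hval i.val hi.1 hi.2, hval i'.val hi'.1 hi'.2, one_mul]

def Xset' (n ℓ m : ℕ) (l j : ℤ) : Set (Fin n → ℂ) :=
  {x | ∃ (Z : Finset (Fin n)) (k : ℕ) (B : Fin k → Finset (Fin n)),
    (Z.card : ℤ) = l ∧ (k : ℤ) = j ∧ (∀ t, (B t).card = m) ∧
    (∀ t, Disjoint Z (B t)) ∧ (∀ t t', t ≠ t' → Disjoint (B t) (B t')) ∧
    (∀ i ∈ Z, x i = 0) ∧
    (∀ t, ∀ i ∈ B t, ∀ i' ∈ B t, ∃ γ : ℂ, γ ^ ℓ = 1 ∧ x i = γ * x i')}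

lemma xw_facts (n ℓ m L J L' J' : ℕ) (hℓ : 1 ≤ ℓ) (hm : 2 ≤ m)
    (hx : (fun i : Fin n => ((wfun L' J' m i.val : ℕ) : ℂ)) ∈ Xset' n ℓ m L J) :
    ∃ a : ℕ, L + a * m ≤ L' ∧ J ≤ J' + a := by
  classical
  obtain ⟨Z, k, B, hZc, hkc, hBc, hdZ, hdB, hzero, hrel⟩ := hx
  have hk : k = J := by exact_mod_cast hkc
  subst hk
  have hZcard : Z.card = L := by exact_mod_cast hZc
  have hweq : ∀ t, ∀ i ∈ B t, ∀ i' ∈ B t,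
      wfun L' J' m i.val = wfun L' J' m i'.val := by
    intro t i hi i' hi'
    obtain ⟨γ, hγ, heq⟩ := hrel t i hi i' hi'
    exact rel_collapse ℓ hℓ _ _ γ hγ heq
  set Blk : Fin J' → Finset (Fin n) := fun s =>
    Finset.univ.filter (fun i : Fin n => L' + s.val * m ≤ i.val ∧ i.val < L' + s.val * m + m)
    with hBlk
  have hBlkcard : ∀ s, (Blk s).card ≤ m := by
    intro s
    have := Finset.card_le_card_of_injOn (fun i : Fin n => i.val)
      (s := Blk s) (t := Finset.Ico (L' + s.val * m) (L' + s.val * m + m))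
      (by intro i hi; rw [hBlk] at hi; simp only [Finset.mem_coe, Finset.mem_filter] at hi
          rw [Finset.mem_coe, Finset.mem_Ico]; exact hi.2)
      (fun i _ i' _ h => Fin.ext h)
    simpa using this
  -- classification of blocks
  have hclass : ∀ t : Fin k, (∀ i ∈ B t, i.val < L') ∨ ∃ s : Fin J', B t = Blk s := by
    intro t
    have hcard2 : 1 < (B t).card := by rw [hBc t]; omega
    obtain ⟨i0, hi0⟩ := Finset.card_pos.mp (show 0 < (B t).card by omega)
    by_cases hc : wfun L' J' m i0.val = 0
    · left
      intro i hi
      have h1 := hweq t i hi i0 hi0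
      rw [hc] at h1
      exact (wfun_eq_zero_iff L' J' m i.val).mp h1
    · right
      -- every element of B t is a "middle" coordinate
      have hmid : ∀ i ∈ B t, L' ≤ i.val ∧ i.val < L' + J' * m := by
        intro i hi
        have hiv := hweq t i hi i0 hi0
        have hiz : ¬ wfun L' J' m i.val = 0 := by rw [hiv]; exact hc
        have hge : L' ≤ i.val := by
          by_contra hlt
          exact hiz ((wfun_eq_zero_iff L' J' m i.val).mpr (by omega))
        refine ⟨hge, ?_⟩
        by_contra htail
        -- i is a tail coordinate
        have hwi : wfun L' J' m i.val = J' + 1 + i.val := by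
          unfold wfun; rw [if_neg (by omega), if_neg (by omega)]
        obtain ⟨i2, hi2, hne⟩ := Finset.exists_mem_ne hcard2 i
        have hv2 : wfun L' J' m i2.val = wfun L' J' m i.val := hweq t i2 hi2 i hi
        have h2z : ¬ wfun L' J' m i2.val = 0 := by rw [hv2, hwi]; omega
        have h2ge : L' ≤ i2.val := by
          by_contra hlt
          exact h2z ((wfun_eq_zero_iff L' J' m i2.val).mpr (by omega))
        by_cases h2mid : i2.val < L' + J' * m
        · have hw2 : wfun L' J' m i2.val = (i2.val - L') / m + 1 := by
            unfold wfun; rw [if_neg (by omega), if_pos (by omega)]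
          have hdivlt : (i2.val - L') / m < J' :=
            (Nat.div_lt_iff_lt_mul (by omega)).mpr (by omega)
          rw [hw2, hwi] at hv2
          omega
        · have hw2 : wfun L' J' m i2.val = J' + 1 + i2.val := by
            unfold wfun; rw [if_neg (by omega), if_neg (by omega)]
          rw [hw2, hwi] at hv2
          exact hne (Fin.ext (by omega))
      -- the common quotient
      have hi0m := hmid i0 hi0
      have hw0 : wfun L' J' m i0.val = (i0.val - L') / m + 1 := by
        unfold wfun; rw [if_neg (by omega), if_pos (by omega)]
      set c0 := (i0.val - L') / m with hc0
      have hc0lt : c0 < J' := (Nat.div_lt_iff_lt_mul (by omega)).mpr (by omega)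
      refine ⟨⟨c0, hc0lt⟩, ?_⟩
      apply Finset.eq_of_subset_of_card_le
      · intro i hi
        have him := hmid i hi
        have hwi : wfun L' J' m i.val = (i.val - L') / m + 1 := by
          unfold wfun; rw [if_neg (by omega), if_pos (by omega)]
        have hv := hweq t i hi i0 hi0
        rw [hwi, hw0] at hv
        have hdiv : (i.val - L') / m = c0 := by omega
        have hlb : c0 * m ≤ i.val - L' := by
          rw [← hdiv]; exact Nat.div_mul_le_self _ _
        have hub : i.val - L' < (c0 + 1) * m := by
          have : (i.val - L') / m < c0 + 1 := by omega
          exact (Nat.div_lt_iff_lt_mul (by omega)).mp this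
        rw [hBlk]
        simp only [Finset.mem_filter, Finset.mem_univ, true_and]
        rw [add_one_mul] at hub
        omega
      · rw [hBc t]; exact hBlkcard _
  -- counting the zero blocks
  set A : Finset (Fin k) := Finset.univ.filter (fun t => ∀ i ∈ B t, i.val < L') with hA
  set a := A.card with ha
  set Zeros : Finset (Fin n) := Finset.univ.filter (fun i => i.val < L') with hZeros
  have hZeroscard : Zeros.card ≤ L' := by
    have := Finset.card_le_card_of_injOn (fun i : Fin n => i.val)
      (s := Zeros) (t := Finset.range L')
      (by intro i hi; rw [hZeros] at hi; simp only [Finset.mem_coe, Finset.mem_filter] at hi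
          rw [Finset.mem_coe, Finset.mem_range]; exact hi.2)
      (fun i _ i' _ h => Fin.ext h)
    simpa using this
  refine ⟨a, ?_, ?_⟩
  · -- L + a * m ≤ L'
    have hdisj : Disjoint Z (A.biUnion B) := by
      rw [Finset.disjoint_biUnion_right]
      exact fun t _ => hdZ t
    have hUsub : Z ∪ A.biUnion B ⊆ Zeros := by
      intro i hi
      rw [Finset.mem_union] at hi
      rw [hZeros, Finset.mem_filter]
      refine ⟨Finset.mem_univ i, ?_⟩
      rcases hi with hi | hi
      · have := hzero i hi
        simp only [Nat.cast_eq_zero] at this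
        exact (wfun_eq_zero_iff L' J' m i.val).mp this
      · rw [Finset.mem_biUnion] at hi
        obtain ⟨t, ht, hit⟩ := hi
        rw [hA, Finset.mem_filter] at ht
        exact ht.2 i hit
    have hUcard : (Z ∪ A.biUnion B).card = L + a * m := by
      rw [Finset.card_union_of_disjoint hdisj, hZcard,
        Finset.card_biUnion (fun t _ t' _ h => hdB t t' h)]
      congr 1
      rw [Finset.sum_congr rfl (fun t _ => hBc t), Finset.sum_const, smul_eq_mul,
        mul_comm]
    calc L + a * m = (Z ∪ A.biUnion B).card := hUcard.symm
    _ ≤ Zeros.card := Finset.card_le_card hUsub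
    _ ≤ L' := hZeroscard
  · -- J ≤ J' + a
    set g : Fin k → ℕ := fun t =>
      if h : ∃ s : Fin J', B t = Blk s then h.choose.val else 0 with hg
    have hcompl : Aᶜ.card ≤ J' := by
      have hmap : ∀ t ∈ Aᶜ, g t ∈ Finset.range J' := by
        intro t ht
        rw [Finset.mem_compl, hA, Finset.mem_filter] at ht
        have hex : ∃ s : Fin J', B t = Blk s := by
          rcases hclass t with h | h
          · exact absurd ⟨Finset.mem_univ t, h⟩ ht
          · exact h
        rw [hg]
        simp only [dif_pos hex]
        rw [Finset.mem_range]
        exact hex.choose.isLt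
      have hinj : Set.InjOn g ↑(Aᶜ) := by
        intro t ht t' ht' hgg
        rw [Finset.coe_compl, Set.mem_compl_iff, Finset.mem_coe, hA,
          Finset.mem_filter] at ht ht'
        have hex : ∃ s : Fin J', B t = Blk s := by
          rcases hclass t with h | h
          · exact absurd ⟨Finset.mem_univ t, h⟩ ht
          · exact h
        have hex' : ∃ s : Fin J', B t' = Blk s := by
          rcases hclass t' with h | h
          · exact absurd ⟨Finset.mem_univ t', h⟩ ht'
          · exact h
        rw [hg] at hgg
        simp only [dif_pos hex, dif_pos hex'] at hgg
        have hBeq : B t = B t' := by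
          have e1 := hex.choose_spec
          have e2 := hex'.choose_spec
          have e3 : hex.choose = hex'.choose := Fin.ext hgg
          rw [e1, e2, e3]
        by_contra hne
        have hd := hdB t t' hne
        rw [hBeq] at hd
        have hemp : B t' = ∅ := by
          have := disjoint_self.mp hd
          simpa using this
        have hcm := hBc t'
        rw [hemp] at hcm
        simp at hcm
        omega
      have := Finset.card_le_card_of_injOn g hmap hinj
      simpa using this
    have : Aᶜ.card = k - a := by
      rw [Finset.card_compl, ha]
      simp
    omega

lemma subset_of_card (n ℓ m L J L' J' : ℕ)
    (h : L + (J - J') * m ≤ L') :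
    Xset' n ℓ m (L' : ℤ) (J' : ℤ) ⊆ Xset' n ℓ m (L : ℤ) (J : ℤ) := by
  classical
  intro x hx
  obtain ⟨Z', k', B', hZ'c, hk'c, hB'c, hdZ', hdB', hzero', hrel'⟩ := hx
  have hk' : k' = J' := by exact_mod_cast hk'c
  subst hk'
  have hZ'card : Z'.card = L' := by exact_mod_cast hZ'c
  set d := J - k' with hd
  have hLle : L ≤ L' := by
    have : L ≤ L + d * m := Nat.le_add_right _ _
    omega
  obtain ⟨Z, hZsub, hZcard⟩ := Finset.exists_subset_card_eq (hZ'card ▸ hLle)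
  have hsd : d * m ≤ (Z' \ Z).card := by
    rw [Finset.card_sdiff_of_subset hZsub, hZ'card, hZcard]
    omega
  obtain ⟨C, hCcard, hCsub, hCdisj⟩ := exists_blocks (Z' \ Z) d m hsd
  set B : Fin J → Finset (Fin n) := fun t =>
    if h : t.val < J - d then B' ⟨t.val, by omega⟩ else C ⟨t.val - (J - d), by omega⟩
    with hB
  have hCZ' : ∀ u, C u ⊆ Z' := fun u => (hCsub u).trans Finset.sdiff_subset
  refine ⟨Z, J, B, by rw [hZcard], rfl, ?_, ?_, ?_, ?_, ?_⟩
  · intro t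
    simp only [hB]
    split_ifs with ht
    · exact hB'c _
    · exact hCcard _
  · intro t
    simp only [hB]
    split_ifs with ht
    · exact (hdZ' _).mono_left hZsub
    · exact Finset.disjoint_sdiff.mono_right (hCsub _)
  · intro t t' htt'
    simp only [hB]
    split_ifs with ht ht' ht'
    · refine hdB' _ _ ?_
      intro hcon
      exact htt' (Fin.ext (by simpa using congrArg Fin.val hcon))
    · exact ((hdZ' _).mono_left (hCZ' _)).symm
    · exact (hdZ' _).mono_left (hCZ' _)
    · refine hCdisj _ _ ?_
      intro hcon
      have h2 := congrArg Fin.val hcon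
      simp only at h2
      exact htt' (Fin.ext (by omega))
  · intro i hi
    exact hzero' i (hZsub hi)
  · intro t i hi i' hi'
    simp only [hB] at hi hi'
    split_ifs at hi hi' with ht
    · exact hrel' _ i hi i' hi'
    · have hz : x i = 0 := hzero' i (hCZ' _ hi)
      have hz' : x i' = 0 := hzero' i' (hCZ' _ hi')
      exact ⟨1, one_pow ℓ, by rw [hz, hz', mul_zero]⟩

theorem statement_1 (n ℓ m : ℕ) (hn : 1 ≤ n) (hℓ : 2 ≤ ℓ) (hm : 2 ≤ m)
    (l j l' j' : ℤ) (hl : 0 ≤ l) (hj : 0 ≤ j) (hl' : 0 ≤ l') (hj' : 0 ≤ j')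
    (hlj : l + j * m ≤ n) (hlj' : l' + j' * m ≤ n) :
    (Xset n ℓ m l' j' ⊆ Xset n ℓ m l j ↔
      max 0 ((j' - j) * m) ≤ (l' + j' * m) - (l + j * m)) ∧
    (Xset n ℓ m l' j' ⊆ Xset n ℓ m l j → l ≤ l') := by
  lift l to ℕ using hl with L
  lift j to ℕ using hj with J
  lift l' to ℕ using hl' with L'
  lift j' to ℕ using hj' with J'
  have hn' : L' + J' * m ≤ n := by exact_mod_cast hlj'
  have key : Xset n ℓ m (L : ℤ) (J : ℤ) = Xset' n ℓ m (L : ℤ) (J : ℤ) := rfl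
  have key' : Xset n ℓ m (L' : ℤ) (J' : ℤ) = Xset' n ℓ m (L' : ℤ) (J' : ℤ) := rfl
  have main : Xset n ℓ m (L' : ℤ) (J' : ℤ) ⊆ Xset n ℓ m (L : ℤ) (J : ℤ) ↔
      L + (J - J') * m ≤ L' := by
    constructor
    · intro hsub
      have hxw := xw_mem n ℓ m L' J' (by omega) (by omega) hn'
      have hmem : (fun i : Fin n => ((wfun L' J' m i.val : ℕ) : ℂ)) ∈
          Xset' n ℓ m (L : ℤ) (J : ℤ) := hsub hxw
      obtain ⟨a, ha1, ha2⟩ := xw_facts n ℓ m L J L' J' (by omega) hm hmem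
      have hmul : (J - J') * m ≤ a * m := Nat.mul_le_mul_right m (by omega)
      omega
    · intro hle
      rw [key, key']
      exact subset_of_card n ℓ m L J L' J' hle
  have harith : (L + (J - J') * m ≤ L') ↔
      max 0 (((J' : ℤ) - (J : ℤ)) * m) ≤ ((L' : ℤ) + J' * m) - ((L : ℤ) + J * m) := by
    have e1 : ((J' : ℤ) - (J : ℤ)) * m = (J' : ℤ) * m - (J : ℤ) * m := sub_mul _ _ _
    rcases le_total J J' with hJJ | hJJ
    · have h0 : J - J' = 0 := by omega
      have hJJz : (J : ℤ) ≤ (J' : ℤ) := by exact_mod_cast hJJ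
      have hmax : max (0 : ℤ) (((J' : ℤ) - J) * m) = ((J' : ℤ) - J) * m :=
        max_eq_right (mul_nonneg (by linarith) (by positivity))
      rw [h0, hmax, e1]
      constructor
      · intro h
        have h2 : (L : ℤ) ≤ (L' : ℤ) := by exact_mod_cast (by omega : L ≤ L')
        linarith
      · intro h
        have h2 : (L : ℤ) ≤ (L' : ℤ) := by linarith
        have h3 : L ≤ L' := by exact_mod_cast h2
        omega
    · have hJJz : (J' : ℤ) ≤ (J : ℤ) := by exact_mod_cast hJJ
      have hnp : ((J' : ℤ) - J) * m ≤ 0 := by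
        have := mul_le_mul_of_nonneg_right (show (J' : ℤ) - J ≤ 0 by linarith)
          (show (0 : ℤ) ≤ m by positivity)
        simpa using this
      have hmax : max (0 : ℤ) (((J' : ℤ) - J) * m) = 0 := max_eq_left hnp
      rw [hmax]
      have hcast : ((J - J' : ℕ) : ℤ) = (J : ℤ) - (J' : ℤ) := by
        push_cast [Nat.cast_sub hJJ]; ring
      have e2 : ((J : ℤ) - (J' : ℤ)) * m = (J : ℤ) * m - (J' : ℤ) * m := sub_mul _ _ _
      constructor
      · intro h
        have h2 : (L : ℤ) + ((J : ℤ) - J') * m ≤ (L' : ℤ) := by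
          have := (Nat.cast_le (α := ℤ)).mpr h
          push_cast at this
          rwa [hcast] at this
        linarith [e2]
      · intro h
        have h2 : (L : ℤ) + ((J : ℤ) - J') * m ≤ (L' : ℤ) := by linarith [e2]
        rw [← hcast] at h2
        exact_mod_cast h2
  refine ⟨main.trans harith, ?_⟩
  intro hsub
  have h1 := main.mp hsub
  have h2 : L ≤ L' := by omega
  exact_mod_cast h2
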